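/- arXiv:0904.3509 — 3 statements merged into one kernel-verified Lean document; each statement's English description precedes it below -/
import Mathlib

section
/- Let 𝓗 and H be complex Hilbert spaces and S : 𝓗 → H a continuous linear map. Then S is surjective if and only if the self-adjoint nonnegative operator S∘S† is coercive, i.e. there exists C > 0 such that re⟪(S∘S†)h, h⟫ ≥ C‖h‖² for all h ∈ H. (This is the characterization of exact controllability by the condition M_T = 𝓑𝓑* ≥ C·Id.) -/
/-- Exact controllability is characterized by the coercivity
`M_T = 𝓑𝓑* ≥ C·Id` of the self-adjoint nonnegative operator `S ∘ S†`. -/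
theorem surjective_iff_coercive_self_comp_adjoint
    {𝓗 H : Type*}
    [NormedAddCommGroup 𝓗] [InnerProductSpace ℂ 𝓗] [CompleteSpace 𝓗]
    [NormedAddCommGroup H] [InnerProductSpace ℂ H] [CompleteSpace H]
    (S : 𝓗 →L[ℂ] H) :
    Function.Surjective S ↔
      ∃ C > 0, ∀ h : H,
        C * ‖h‖ ^ 2 ≤ (inner ℂ ((S.comp (ContinuousLinearMap.adjoint S)) h) h : ℂ).re := by
  set T := ContinuousLinearMap.adjoint S with hT
  have key : ∀ h : H, (inner ℂ ((S.comp T) h) h : ℂ).re = ‖T h‖ ^ 2 := by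
    intro h
    rw [ContinuousLinearMap.comp_apply, ← ContinuousLinearMap.adjoint_inner_right S (T h) h,
      ← hT]
    simpa using inner_self_eq_norm_sq (𝕜 := ℂ) (T h)
  constructor
  · intro hsurj
    obtain ⟨C, Cpos, hC⟩ := S.exists_preimage_norm_le hsurj
    refine ⟨1 / C ^ 2, by positivity, fun h => ?_⟩
    obtain ⟨g, hg, hgn⟩ := hC h
    have h1 : ‖h‖ ^ 2 ≤ C * ‖h‖ * ‖T h‖ := by
      have h2 : (inner ℂ g (T h) : ℂ).re = (inner ℂ h h : ℂ).re := by
        rw [hT, ContinuousLinearMap.adjoint_inner_right, hg]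
      have h3 : (inner ℂ h h : ℂ).re = ‖h‖ ^ 2 := by simpa using inner_self_eq_norm_sq (𝕜 := ℂ) h
      have h4 : (inner ℂ g (T h) : ℂ).re ≤ ‖g‖ * ‖T h‖ := by simpa using re_inner_le_norm (𝕜 := ℂ) g (T h)
      nlinarith [norm_nonneg (T h), norm_nonneg h,
        mul_le_mul_of_nonneg_right hgn (norm_nonneg (T h))]
    have hb : ‖h‖ ≤ C * ‖T h‖ := by
      rcases eq_or_lt_of_le (norm_nonneg h) with h0 | h0
      · rw [← h0]; positivity
      · nlinarith
    rw [key h, div_mul_eq_mul_div, one_mul, div_le_iff₀ (by positivity)]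
    nlinarith [norm_nonneg (T h), norm_nonneg h]
  · rintro ⟨C, Cpos, hC⟩
    set f := S.comp T with hf
    have hbound : ∀ h, ‖h‖ ≤ (⟨C⁻¹, by positivity⟩ : NNReal) * ‖f h‖ := by
      intro h
      have hr : (inner ℂ (f h) h : ℂ).re ≤ ‖f h‖ * ‖h‖ := by simpa using re_inner_le_norm (𝕜 := ℂ) (f h) h
      have h1 : C * ‖h‖ ^ 2 ≤ ‖f h‖ * ‖h‖ := (hC h).trans hr
      rcases eq_or_lt_of_le (norm_nonneg h) with h0 | h0
      · rw [← h0]; positivity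
      · have : C * ‖h‖ ≤ ‖f h‖ := by nlinarith
        simp only [NNReal.coe_mk]
        calc ‖h‖ = C⁻¹ * (C * ‖h‖) := by field_simp
          _ ≤ C⁻¹ * ‖f h‖ := by
            apply mul_le_mul_of_nonneg_left _ (by positivity)
            nlinarith
    have hanti : AntilipschitzWith _ f := f.antilipschitz_of_bound hbound
    have hclosed : IsClosed (Set.range f) := hanti.isClosed_range f.uniformContinuous
    have hrange : IsClosed ((LinearMap.range (f : H →ₗ[ℂ] H) : Submodule ℂ H) : Set H) := by
      exact hclosed
    haveI : CompleteSpace (LinearMap.range (f : H →ₗ[ℂ] H)) := hrange.completeSpace_coe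
    have horth : (LinearMap.range (f : H →ₗ[ℂ] H))ᗮ = ⊥ := by
      rw [Submodule.eq_bot_iff]
      intro h hh
      have h0 : (inner ℂ (f h) h : ℂ) = 0 :=
        (Submodule.mem_orthogonal _ h).mp hh (f h) (LinearMap.mem_range_self _ h)
      have h1 := hC h
      rw [show ((S.comp T) h) = f h from rfl, h0] at h1
      have : ‖h‖ = 0 := by
        simp only [Complex.zero_re] at h1
        by_contra hne
        have hpos : 0 < ‖h‖ := lt_of_le_of_ne (norm_nonneg h) (Ne.symm hne)
        have : 0 < C * ‖h‖ ^ 2 := by positivity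
        linarith
      simpa using this
    have htop : LinearMap.range (f : H →ₗ[ℂ] H) = ⊤ := Submodule.orthogonal_eq_bot_iff.mp horth
    intro y
    obtain ⟨x, hx⟩ := htop ▸ (Submodule.mem_top : y ∈ (⊤ : Submodule ℂ H))
    exact ⟨T x, hx⟩
end

section
/- Let H be a complex Hilbert space, M : H → H a continuous linear self-adjoint map, and C > 0 a constant such that re⟪Mu, u⟫ ≥ C‖u‖² for all u ∈ H, so that M has a continuous inverse Λ = M⁻¹. Let (P_n)_{n∈ℕ} be a sequence of orthogonal projections of H onto finite-dimensional subspaces V_n with V_n ⊆ V_{n+1} for all n and P_n x → x as n → ∞ for every x ∈ H. Fix f ∈ H, and for each n let g_n be the unique element of V_n satisfying P_n(M g_n) = P_n f. Then g_n converges in norm to Λ f as n → ∞. (This is the convergence of the spectral Galerkin approximation M_{T,ω}^{-1}(Π_ω f) to the optimal control operator Λ(f) as the cutoff frequency ω → ∞.) -/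
open Filter Topology

/-- Convergence of the spectral Galerkin approximation: if `M` is self-adjoint and coercive,
`Λ = M⁻¹`, and `(V_n)` are nested finite-dimensional subspaces whose orthogonal projections
converge strongly to the identity, then the Galerkin solutions `g_n ∈ V_n` of
`P_n (M g_n) = P_n f` converge in norm to `Λ f`. -/
theorem galerkin_convergence
    {H : Type*} [NormedAddCommGroup H] [InnerProductSpace ℂ H] [CompleteSpace H]
    (M Λ : H →L[ℂ] H) (hsa : IsSelfAdjoint M) (C : ℝ) (hC : 0 < C)
    (hcoer : ∀ u : H, C * ‖u‖ ^ 2 ≤ (inner ℂ (M u) u : ℂ).re)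
    (hinv₁ : ∀ x : H, Λ (M x) = x) (hinv₂ : ∀ x : H, M (Λ x) = x)
    (V : ℕ → Submodule ℂ H) [∀ n, FiniteDimensional ℂ (V n)]
    (hmono : ∀ n, V n ≤ V (n + 1))
    (hconv : ∀ x : H, Tendsto (fun n => (Submodule.orthogonalProjectionOnto (V n) x : H)) atTop (𝓝 x))
    (f : H) (g : ℕ → H)
    (hg : ∀ n, g n ∈ V n ∧
      Submodule.orthogonalProjectionOnto (V n) (M (g n)) = Submodule.orthogonalProjectionOnto (V n) f) :
    Tendsto g atTop (𝓝 (Λ f)) := by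
  set u := Λ f with hu
  have hMu : M u = f := hinv₂ f
  -- Galerkin orthogonality: ⟪M (g n) - M u, v⟫ = 0 for v ∈ V n
  have key : ∀ n, ∀ v ∈ V n, (inner ℂ (M (g n) - M u) v : ℂ) = 0 := by
    intro n v hv
    have h1 : (inner ℂ (M (g n) - (Submodule.orthogonalProjectionOnto (V n) (M (g n)) : H)) v : ℂ) = 0 :=
      (V n).starProjection_inner_eq_zero _ v hv
    have h2 : (inner ℂ (f - (Submodule.orthogonalProjectionOnto (V n) f : H)) v : ℂ) = 0 :=
      (V n).starProjection_inner_eq_zero _ v hv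
    have h3 := (hg n).2
    rw [inner_sub_left] at h1 h2 ⊢
    rw [sub_eq_zero] at h1 h2
    rw [hMu, sub_eq_zero, h1, h3, ← h2]
  -- error estimate
  have hbound : ∀ n, ‖g n - (Submodule.orthogonalProjectionOnto (V n) u : H)‖
      ≤ (‖M‖ / C) * ‖u - (Submodule.orthogonalProjectionOnto (V n) u : H)‖ := by
    intro n
    set e : H := g n - (Submodule.orthogonalProjectionOnto (V n) u : H) with he
    have heV : e ∈ V n := sub_mem (hg n).1 (Submodule.coe_mem _)
    have horth : (inner ℂ (M (g n) - M u) e : ℂ) = 0 := key n e heV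
    have hsplit : M e = (M (g n) - M u) + M (u - (Submodule.orthogonalProjectionOnto (V n) u : H)) := by
      simp only [he, map_sub]; abel
    have hre : (inner ℂ (M e) e : ℂ).re = (inner ℂ (M (u - (Submodule.orthogonalProjectionOnto (V n) u : H))) e : ℂ).re := by
      rw [hsplit, inner_add_left, horth]
      simp [inner_sub_left]
    have hcs : (inner ℂ (M (u - (Submodule.orthogonalProjectionOnto (V n) u : H))) e : ℂ).re
        ≤ ‖M‖ * ‖u - (Submodule.orthogonalProjectionOnto (V n) u : H)‖ * ‖e‖ := by
      calc (inner ℂ (M (u - (Submodule.orthogonalProjectionOnto (V n) u : H))) e : ℂ).re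
          ≤ ‖(inner ℂ (M (u - (Submodule.orthogonalProjectionOnto (V n) u : H))) e : ℂ)‖ :=
            Complex.re_le_norm _
        _ ≤ ‖M (u - (Submodule.orthogonalProjectionOnto (V n) u : H))‖ * ‖e‖ := norm_inner_le_norm _ _
        _ ≤ ‖M‖ * ‖u - (Submodule.orthogonalProjectionOnto (V n) u : H)‖ * ‖e‖ := by
            exact mul_le_mul_of_nonneg_right (M.le_opNorm _) (norm_nonneg _)
    have hmain : C * ‖e‖ ^ 2 ≤ ‖M‖ * ‖u - (Submodule.orthogonalProjectionOnto (V n) u : H)‖ * ‖e‖ :=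
      le_trans (by rw [← hre] at hcs; exact (hcoer e).trans_eq hre) hcs
    rcases eq_or_lt_of_le (norm_nonneg e) with h0 | h0
    · rw [← h0]
      positivity
    · have := (mul_le_mul_iff_left₀ h0).mp (by nlinarith)
      rw [div_mul_eq_mul_div, le_div_iff₀ hC]
      nlinarith
  -- conclude
  have hPu := hconv u
  have h0 : Tendsto (fun n => ‖u - (Submodule.orthogonalProjectionOnto (V n) u : H)‖) atTop (𝓝 0) := by
    have : Tendsto (fun n => u - (Submodule.orthogonalProjectionOnto (V n) u : H)) atTop (𝓝 (u - u)) :=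
      tendsto_const_nhds.sub hPu
    simpa using this.norm
  have h1 : Tendsto (fun n => g n - (Submodule.orthogonalProjectionOnto (V n) u : H)) atTop (𝓝 0) := by
    apply squeeze_zero_norm (fun n => hbound n)
    simpa using h0.const_mul (‖M‖ / C)
  have := h1.add hPu
  simpa using this
end

section
/- Let H be a complex Hilbert space with a Hilbert (orthonormal) basis (e_j)_{j∈ℕ}, and let ω : ℕ → ℝ satisfy ω_j > 0 for all j. Fix s ≥ 0 and suppose T_s : H → H is a continuous linear map with T_s e_j = ω_j^{-s} e_j for every j, and Λ, Λ_s : H → H are continuous linear maps with Λ ∘ T_s = T_s ∘ Λ_s. Let 0 < ω₀ ≤ ω and let Π_ω denote the orthogonal projection of H onto the closed span of {e_j : ω_j ≤ ω}. Then for every f in the linear span of the finite set {e_j : ω_j ≤ ω₀} one has ‖(Id − Π_ω)(Λ f)‖ ≤ ‖Λ_s‖ (ω₀/ω)^s ‖f‖, where ‖Λ_s‖ is the operator norm and the set {j : ω_j ≤ ω₀} is assumed finite. (This is the rapid-decay estimate r_Λ(ω, ω₀) ≤ C_s (ω₀/ω)^s of Lemma 3, obtained from the boundedness of λ^s Λ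 λ^{-s}.) -/
open scoped InnerProductSpace ENNReal

set_option linter.unusedSectionVars false

section helpers

variable {H : Type*} [NormedAddCommGroup H] [InnerProductSpace ℂ H] [CompleteSpace H]
  {e : ℕ → H}

lemma hfd_inner_hasSum (he : Orthonormal ℂ e) {c : ℕ → ℂ} {x : H}
    (hx : HasSum (fun j => c j • e j) x) (j : ℕ) : ⟪e j, x⟫_ℂ = c j := by
  have h1 : HasSum (fun i => ⟪e j, c i • e i⟫_ℂ) ⟪e j, x⟫_ℂ :=
    (innerSL ℂ (e j)).hasSum hx
  have h2 : (fun i => ⟪e j, c i • e i⟫_ℂ) = fun i => if i = j then c j else 0 := by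
    funext i
    rw [inner_smul_right, orthonormal_iff_ite.mp he j i]
    rcases eq_or_ne i j with rfl | hij
    · simp
    · simp [hij, Ne.symm hij]
  rw [h2] at h1
  exact h1.unique (hasSum_ite_eq j (c j))

lemma hfd_repr_eq (he : Orthonormal ℂ e)
    (hbasis : (Submodule.span ℂ (Set.range e)).topologicalClosure = ⊤)
    {c : ℕ → ℂ} {x : H} (hx : HasSum (fun j => c j • e j) x) :
    (fun j => (HilbertBasis.mk he hbasis.ge).repr x j) = c := by
  funext j
  rw [HilbertBasis.repr_apply_apply, HilbertBasis.coe_mk]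
  exact hfd_inner_hasSum he hx j

lemma hfd_norm_sq_eq (he : Orthonormal ℂ e)
    (hbasis : (Submodule.span ℂ (Set.range e)).topologicalClosure = ⊤)
    {c : ℕ → ℂ} {x : H} (hx : HasSum (fun j => c j • e j) x) :
    ‖x‖ ^ 2 = ∑' j, ‖c j‖ ^ 2 := by
  set b := HilbertBasis.mk he hbasis.ge with hb
  have h1 : ‖x‖ = ‖b.repr x‖ := (b.repr.norm_map x).symm
  have h2 : ‖b.repr x‖ ^ (2 : ℝ≥0∞).toReal = ∑' j, ‖b.repr x j‖ ^ (2 : ℝ≥0∞).toReal :=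
    lp.norm_rpow_eq_tsum (by norm_num) (b.repr x)
  have h3 : (fun j => b.repr x j) = c := hfd_repr_eq he hbasis hx
  rw [h1]
  have h2' : ‖b.repr x‖ ^ (2 : ℕ) = ∑' j, ‖b.repr x j‖ ^ (2 : ℕ) := by
    have := h2
    simp only [ENNReal.toReal_ofNat] at this
    rw [show ((2:ℝ)) = ((2:ℕ):ℝ) by norm_num] at this
    simpa only [Real.rpow_natCast] using this
  rw [h2']
  congr 1
  funext j
  rw [congrFun h3 j]

section helpers2


variable {H : Type*} [NormedAddCommGroup H] [InnerProductSpace ℂ H] [CompleteSpace H]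
  {e : ℕ → H}

-- summability of coefficients from summability of vectors, and back
lemma hfd_summable_iff (he : Orthonormal ℂ e) (c : ℕ → ℂ) :
    (Summable fun j => c j • e j) ↔ Summable fun j => ‖c j‖ ^ 2 := by
  have := he.orthogonalFamily.summable_iff_norm_sq_summable c
  simpa only [LinearIsometry.toSpanSingleton_apply] using this

lemma hfd_norm_le_of_coeff (he : Orthonormal ℂ e)
    (hbasis : (Submodule.span ℂ (Set.range e)).topologicalClosure = ⊤)
    {a c : ℕ → ℂ} {x y : H} (hx : HasSum (fun j => a j • e j) x)
    (hy : HasSum (fun j => c j • e j) y) {C : ℝ} (hC : 0 ≤ C)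
    (hcomp : ∀ j, ‖c j‖ ≤ C * ‖a j‖) : ‖y‖ ≤ C * ‖x‖ := by
  have hxs : Summable fun j => ‖a j‖ ^ 2 := (hfd_summable_iff he a).mp hx.summable
  have hys : Summable fun j => ‖c j‖ ^ 2 := (hfd_summable_iff he c).mp hy.summable
  have hx2 : ‖x‖ ^ 2 = ∑' j, ‖a j‖ ^ 2 := hfd_norm_sq_eq he hbasis hx
  have hy2 : ‖y‖ ^ 2 = ∑' j, ‖c j‖ ^ 2 := hfd_norm_sq_eq he hbasis hy
  have key : ‖y‖ ^ 2 ≤ (C * ‖x‖) ^ 2 := by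
    rw [hy2, mul_pow, hx2, ← tsum_mul_left]
    refine hys.tsum_le_tsum (fun j => ?_) (hxs.mul_left _)
    calc ‖c j‖ ^ 2 ≤ (C * ‖a j‖) ^ 2 :=
          pow_le_pow_left₀ (norm_nonneg _) (hcomp j) 2
      _ = C ^ 2 * ‖a j‖ ^ 2 := mul_pow _ _ _
  calc ‖y‖ = Real.sqrt (‖y‖ ^ 2) := (Real.sqrt_sq (norm_nonneg _)).symm
    _ ≤ Real.sqrt ((C * ‖x‖) ^ 2) := Real.sqrt_le_sqrt key
    _ = C * ‖x‖ := Real.sqrt_sq (by positivity)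


end helpers2

end helpers

section helpers3

variable {H : Type*} [NormedAddCommGroup H] [InnerProductSpace ℂ H] [CompleteSpace H]
  {e : ℕ → H}

lemma hfd_mem_closure_span (he : Orthonormal ℂ e) {c : ℕ → ℂ} {v : H} {S : Set ℕ}
    (hv : HasSum (fun j => c j • e j) v) (hsupp : ∀ j, c j ≠ 0 → j ∈ S) :
    v ∈ (Submodule.span ℂ (e '' S)).topologicalClosure := by
  refine mem_closure_of_tendsto hv (Filter.Eventually.of_forall fun F => ?_)
  refine Submodule.sum_mem _ fun j _ => ?_
  by_cases h : c j = 0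
  · simp [h]
  · exact Submodule.smul_mem _ _ (Submodule.subset_span ⟨j, hsupp j h, rfl⟩)

lemma hfd_proj_min {Pi : H →L[ℂ] H} (hidem : IsIdempotentElem Pi)
    (hsa : IsSelfAdjoint Pi) (x : H) {v : H} (hv : v ∈ Set.range Pi) :
    ‖x - Pi x‖ ≤ ‖x - v‖ := by
  obtain ⟨z, rfl⟩ := hv
  have hsym : (Pi : H →ₗ[ℂ] H).IsSymmetric :=
    ContinuousLinearMap.isSelfAdjoint_iff_isSymmetric.mp hsa
  have hPP : ∀ w, Pi (Pi w) = Pi w := fun w => by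
    conv_rhs => rw [← hidem]
    rfl
  have horth : ⟪x - Pi x, Pi x - Pi z⟫_ℂ = 0 := by
    have h0 : Pi x - Pi z = Pi (x - z) := (map_sub Pi x z).symm
    have h1 := hsym (x - Pi x) (x - z)
    simp only [ContinuousLinearMap.coe_coe] at h1
    rw [h0, ← h1]
    simp [map_sub, hPP]
  have : ‖x - Pi z‖ ^ 2 = ‖x - Pi x‖ ^ 2 + ‖Pi x - Pi z‖ ^ 2 := by
    have hdecomp : x - Pi z = (x - Pi x) + (Pi x - Pi z) := by abel
    have := norm_add_sq_eq_norm_sq_add_norm_sq_of_inner_eq_zero _ _ horth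
    rw [hdecomp]
    nlinarith [this]
  have h2 : ‖x - Pi x‖ ^ 2 ≤ ‖x - Pi z‖ ^ 2 := by nlinarith [sq_nonneg ‖Pi x - Pi z‖]
  calc ‖x - Pi x‖ = Real.sqrt (‖x - Pi x‖ ^ 2) := (Real.sqrt_sq (norm_nonneg _)).symm
    _ ≤ Real.sqrt (‖x - Pi z‖ ^ 2) := Real.sqrt_le_sqrt h2
    _ = ‖x - Pi z‖ := Real.sqrt_sq (norm_nonneg _)

end helpers3
lemma hfd_real_smul {H : Type*} [NormedAddCommGroup H] [InnerProductSpace ℂ H]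
    (r : ℝ) (x : H) : ((r : ℂ)) • x = r • x := by
  rw [← algebraMap_smul ℂ r x]; norm_num

/-- The rapid-decay estimate `r_Λ(ω, ω₀) ≤ C_s (ω₀/ω)^s` of Lemma 3: if `λ^s Λ λ^{-s} = Λ_s`
is bounded, then for data `f` spanned by eigenvectors of frequency at most `ω₀`, the
high-frequency part of `Λ f` beyond the cutoff `ω` is bounded by `‖Λ_s‖ (ω₀/ω)^s ‖f‖`. -/
theorem high_frequency_decay
    {H : Type*} [NormedAddCommGroup H] [InnerProductSpace ℂ H] [CompleteSpace H]
    (e : ℕ → H) (he : Orthonormal ℂ e)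
    (hbasis : (Submodule.span ℂ (Set.range e)).topologicalClosure = ⊤)
    (ω : ℕ → ℝ) (hω : ∀ j, 0 < ω j)
    (s : ℝ) (hs : 0 ≤ s)
    (Ts Λ Λs : H →L[ℂ] H)
    (hTs : ∀ j, Ts (e j) = ((ω j) ^ (-s) : ℝ) • e j)
    (hcomm : Λ.comp Ts = Ts.comp Λs)
    (ω₀ ωc : ℝ) (hω₀ : 0 < ω₀) (hle : ω₀ ≤ ωc)
    (hfin : {j : ℕ | ω j ≤ ω₀}.Finite)
    (Pi : H →L[ℂ] H) (hidem : IsIdempotentElem Pi) (hsa : IsSelfAdjoint Pi)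
    (hrange : Set.range Pi =
      ((Submodule.span ℂ (e '' {j : ℕ | ω j ≤ ωc})).topologicalClosure : Set H)) :
    ∀ f ∈ Submodule.span ℂ (e '' {j : ℕ | ω j ≤ ω₀}),
      ‖Λ f - Pi (Λ f)‖ ≤ ‖Λs‖ * (ω₀ / ωc) ^ s * ‖f‖ := by
  classical
  intro f hf
  have hωc : 0 < ωc := lt_of_lt_of_le hω₀ hle
  set F : Finset ℕ := hfin.toFinset with hF
  have hmemF : ∀ j, j ∈ F ↔ ω j ≤ ω₀ := fun j => hfin.mem_toFinset
  have einj : Function.Injective e := he.linearIndependent.injective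
  -- coefficients of f
  have hf' : f ∈ Submodule.span ℂ (↑(F.image e) : Set H) := by
    rwa [Finset.coe_image, Set.Finite.coe_toFinset]
  obtain ⟨cc, -, hcc⟩ := Submodule.mem_span_finset.mp hf'
  set a : ℕ → ℂ := fun j => if j ∈ F then cc (e j) else 0 with ha
  have hsumf : (∑ j ∈ F, a j • e j) = f := by
    rw [← hcc, Finset.sum_image (fun x _ y _ h => einj h)]
    exact Finset.sum_congr rfl fun j hj => by simp [ha, hj]
  have hfa : HasSum (fun j => a j • e j) f := by
    rw [← hsumf]
    exact hasSum_sum_of_ne_finset_zero (fun j hj => by simp [ha, hj])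
  -- the preimage g with f = Ts g
  set gc : ℕ → ℂ := fun j => (((ω j) ^ s : ℝ) : ℂ) * a j with hgc
  set g : H := ∑ j ∈ F, gc j • e j with hg
  have hga : HasSum (fun j => gc j • e j) g :=
    hasSum_sum_of_ne_finset_zero (fun j hj => by simp [hgc, ha, hj])
  have hmul : ∀ j, ((ω j) ^ (-s) : ℝ) * ((ω j) ^ s : ℝ) = 1 := fun j => by
    rw [← Real.rpow_add (hω j)]; simp
  have hTsg : Ts g = f := by
    rw [hg, map_sum, ← hsumf]
    refine Finset.sum_congr rfl fun j hj => ?_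
    rw [map_smul, hTs j, ← hfd_real_smul, smul_smul]
    congr 1
    rw [hgc]
    push_cast
    rw [mul_comm, ← mul_assoc, ← Complex.ofReal_mul, hmul j]
    simp
  set h : H := Λs g with hh
  have hΛf : Λ f = Ts h := by
    rw [← hTsg, hh]
    have := congrFun (congrArg (fun (T : H →L[ℂ] H) => (T : H → H)) hcomm) g
    simpa using this
  -- ‖g‖ ≤ ω₀^s ‖f‖
  have hgnorm : ‖g‖ ≤ (ω₀ ^ s : ℝ) * ‖f‖ := by
    refine hfd_norm_le_of_coeff he hbasis hfa hga (Real.rpow_nonneg hω₀.le s) fun j => ?_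
    by_cases hj : j ∈ F
    · have : ‖gc j‖ = ((ω j) ^ s : ℝ) * ‖a j‖ := by
        rw [hgc]
        simp [norm_mul, Complex.norm_real, abs_of_nonneg (Real.rpow_nonneg (hω j).le s)]
      rw [this]
      exact mul_le_mul_of_nonneg_right
        (Real.rpow_le_rpow (hω j).le ((hmemF j).mp hj) hs) (norm_nonneg _)
    · simp [hgc, ha, hj, Real.rpow_nonneg hω₀.le s, mul_nonneg, norm_nonneg]
  have hhnorm : ‖h‖ ≤ ‖Λs‖ * ‖g‖ := Λs.le_opNorm g
  -- coefficients of h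
  set b := HilbertBasis.mk he hbasis.ge with hb
  set u : ℕ → ℂ := fun j => b.repr h j with hu
  have hcoe : ⇑b = e := HilbertBasis.coe_mk _ _
  have hhu : HasSum (fun j => u j • e j) h := by
    have := b.hasSum_repr h
    rw [hcoe] at this
    exact this
  -- Ts h expansion
  have hTsh : HasSum (fun j => ((((ω j) ^ (-s) : ℝ) : ℂ) * u j) • e j) (Ts h) := by
    have h1 := Ts.hasSum hhu
    have h2 : (fun j => Ts (u j • e j)) =
        fun j => ((((ω j) ^ (-s) : ℝ) : ℂ) * u j) • e j := by
      funext j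
      rw [map_smul, hTs j, ← hfd_real_smul, smul_smul, mul_comm]
    rwa [h2] at h1
  set w : ℕ → ℂ := fun j => if ω j ≤ ωc then (((ω j) ^ (-s) : ℝ) : ℂ) * u j else 0 with hw
  set d : ℕ → ℂ := fun j => if ω j ≤ ωc then 0 else (((ω j) ^ (-s) : ℝ) : ℂ) * u j with hd
  -- bound on eigenvalues
  have heig : ∀ j, ((ω j) ^ (-s) : ℝ) ≤ ‖Ts‖ := fun j => by
    have h1 : ‖Ts (e j)‖ ≤ ‖Ts‖ := by
      simpa [he.1 j] using Ts.le_opNorm (e j)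
    have h2 : ‖Ts (e j)‖ = ((ω j) ^ (-s) : ℝ) := by
      rw [hTs j, norm_smul, he.1 j]
      simp [abs_of_nonneg (Real.rpow_nonneg (hω j).le (-s))]
    linarith [h2 ▸ h1]
  -- summability of w
  have husum : Summable fun j => ‖u j‖ ^ 2 := (hfd_summable_iff he u).mp hhu.summable
  have hwsum : Summable fun j => w j • e j := by
    rw [hfd_summable_iff he w]
    refine Summable.of_nonneg_of_le (fun j => by positivity)
      (fun j => ?_) (husum.mul_left (‖Ts‖ ^ 2))
    rw [hw]
    by_cases hj : ω j ≤ ωc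
    · simp only [hj, if_true]
      rw [norm_mul, mul_pow, Complex.norm_real, Real.norm_eq_abs,
        abs_of_nonneg (Real.rpow_nonneg (hω j).le (-s))]
      exact mul_le_mul_of_nonneg_right
        (pow_le_pow_left₀ (Real.rpow_nonneg (hω j).le (-s)) (heig j) 2) (sq_nonneg _)
    · simp only [hj, if_false, norm_zero]
      have : (0:ℝ) ^ 2 = 0 := by norm_num
      rw [this]
      positivity
  obtain ⟨v, hv⟩ := hwsum
  -- Ts h - v expansion
  have hdsum : HasSum (fun j => d j • e j) (Ts h - v) := by
    have h1 := hTsh.sub hv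
    have h2 : (fun j => ((((ω j) ^ (-s) : ℝ) : ℂ) * u j) • e j - w j • e j) =
        fun j => d j • e j := by
      funext j
      rw [← sub_smul]
      congr 1
      rw [hw, hd]
      by_cases hj : ω j ≤ ωc <;> simp [hj]
    rwa [h2] at h1
  -- v is in the range of Pi
  have hvmem : v ∈ Set.range Pi := by
    rw [hrange]
    refine hfd_mem_closure_span he hv fun j hj => ?_
    by_contra hc
    simp only [Set.mem_setOf_eq] at hc
    exact hj (by simp [hw, hc])
  -- the tail bound
  have htail : ‖Ts h - v‖ ≤ (ωc ^ (-s) : ℝ) * ‖h‖ := by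
    refine hfd_norm_le_of_coeff he hbasis hhu hdsum (Real.rpow_nonneg hωc.le (-s)) fun j => ?_
    rw [hd]
    by_cases hj : ω j ≤ ωc
    · simp only [hj, if_true, norm_zero]
      positivity
    · simp only [hj, if_false]
      rw [norm_mul, Complex.norm_real, Real.norm_eq_abs,
        abs_of_nonneg (Real.rpow_nonneg (hω j).le (-s))]
      refine mul_le_mul_of_nonneg_right ?_ (norm_nonneg _)
      push_neg at hj
      rw [Real.rpow_neg (hω j).le, Real.rpow_neg hωc.le]
      exact inv_anti₀ (Real.rpow_pos_of_pos hωc s)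
        (Real.rpow_le_rpow hωc.le hj.le hs)
  -- projection minimality
  have hproj : ‖Ts h - Pi (Ts h)‖ ≤ ‖Ts h - v‖ := hfd_proj_min hidem hsa (Ts h) hvmem
  -- assemble
  have hfinal : ‖Λ f - Pi (Λ f)‖ ≤ (ωc ^ (-s) : ℝ) * (‖Λs‖ * ((ω₀ ^ s : ℝ) * ‖f‖)) := by
    rw [hΛf]
    refine hproj.trans (htail.trans ?_)
    have h1 : ‖h‖ ≤ ‖Λs‖ * ((ω₀ ^ s : ℝ) * ‖f‖) :=
      hhnorm.trans (mul_le_mul_of_nonneg_left hgnorm (norm_nonneg _))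
    exact mul_le_mul_of_nonneg_left h1 (Real.rpow_nonneg hωc.le (-s))
  refine hfinal.trans (le_of_eq ?_)
  rw [Real.div_rpow hω₀.le hωc.le, Real.rpow_neg hωc.le, div_eq_mul_inv]
  ring
end
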